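/- arXiv:1902.00800 — 2 statements merged into one kernel-verified Lean document; each statement's English description precedes it below -/
import Mathlib

section
/- Let ξ1,…,ξn be i.i.d. standard Gaussian random variables, A ⊆ ℝⁿ, φ : ℝ → ℝ a 1-Lipschitz function with φ(0)=0, and G : ℝ → ℝ nondecreasing and convex. Then E[sup_{a ∈ A} G(Σᵢ ξᵢ φ(aᵢ))] ≤ E[sup_{a ∈ A} G(Σᵢ ξᵢ aᵢ)]. -/
open MeasureTheory ProbabilityTheory

open Set Real
open scoped NNReal ENNReal

namespace GCaux

private lemma lemA_aux {G : ℝ → ℝ} (hm : Monotone G) (hc : ConvexOn ℝ Set.univ G)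
    {a b a' b' : ℝ} (hab : a ≤ b) (ha'b' : a' ≤ b')
    (hsum : a + b ≤ a' + b') (hb : b ≤ b') :
    G a + G b ≤ G a' + G b' := by
  rcases le_or_gt a a' with h | h
  · exact add_le_add (hm h) (hm hb)
  · have hbb' : b < b' := by linarith
    have hab' : a ≤ b' := hab.trans hb
    have h1 : (G a - G a') / (a - a') ≤ (G b' - G a') / (b' - a') :=
      hc.secant_mono (mem_univ a') (mem_univ a) (mem_univ b') h.ne' (by linarith) hab'
    have h2 : (G a' - G b') / (a' - b') ≤ (G b - G b') / (b - b') :=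
      hc.secant_mono (mem_univ b') (mem_univ a') (mem_univ b) (by linarith) hbb'.ne
        (by linarith)
    have he : (G a' - G b') / (a' - b') = (G b' - G a') / (b' - a') := by
      rw [← neg_div_neg_eq]; ring_nf
    have he2 : (G b - G b') / (b - b') = (G b' - G b) / (b' - b) := by
      rw [← neg_div_neg_eq]; ring_nf
    rw [he] at h2
    rw [he2] at h2
    have h3 : (G a - G a') / (a - a') ≤ (G b' - G b) / (b' - b) := h1.trans h2
    have hs2 : 0 ≤ (G b' - G b) / (b' - b) :=
      div_nonneg (by linarith [hm hbb'.le]) (by linarith)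
    have h4 : (G a - G a') / (a - a') * (a - a') = G a - G a' :=
      div_mul_cancel₀ _ (sub_ne_zero.mpr h.ne')
    have h5 : (G b' - G b) / (b' - b) * (b' - b) = G b' - G b :=
      div_mul_cancel₀ _ (sub_ne_zero.mpr hbb'.ne')
    have h6 : (G a - G a') / (a - a') * (a - a') ≤ (G b' - G b) / (b' - b) * (a - a') :=
      mul_le_mul_of_nonneg_right h3 (by linarith)
    have h7 : (G b' - G b) / (b' - b) * (a - a') ≤ (G b' - G b) / (b' - b) * (b' - b) :=
      mul_le_mul_of_nonneg_left (by linarith) hs2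
    linarith

private lemma lemA {G : ℝ → ℝ} (hm : Monotone G) (hc : ConvexOn ℝ Set.univ G)
    {a b a' b' : ℝ} (hsum : a + b ≤ a' + b')
    (h1 : a ≤ max a' b') (h2 : b ≤ max a' b') : G a + G b ≤ G a' + G b' := by
  rcases le_total a' b' with h' | h'
  · rw [max_eq_right h'] at h1 h2
    rcases le_total a b with h | h
    · exact lemA_aux hm hc h h' hsum h2
    · have := lemA_aux hm hc h h' (by linarith) h1; linarith
  · rw [max_eq_left h'] at h1 h2
    rcases le_total a b with h | h
    · have := lemA_aux hm hc h h' (by linarith) h2; linarith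
    · have := lemA_aux hm hc h h' (by linarith) h1; linarith

private lemma key_sup {ι : Type*} {A : Set ι} (hA : A.Nonempty) {G : ℝ → ℝ}
    (hm : Monotone G) (hc : ConvexOn ℝ Set.univ G)
    (h p q : ι → ℝ)
    (hpq : ∀ s ∈ A, ∀ t ∈ A, |p s - p t| ≤ |q s - q t|)
    (hp0 : ∀ s ∈ A, |p s| ≤ |q s|)
    (bTp : BddAbove ((fun a => h a + q a) '' A)) (bTm : BddAbove ((fun a => h a - q a) '' A)) :
    G (sSup ((fun a => h a + p a) '' A)) + G (sSup ((fun a => h a - p a) '' A))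
      ≤ G (sSup ((fun a => h a + q a) '' A)) + G (sSup ((fun a => h a - q a) '' A)) := by
  set Sp := sSup ((fun a => h a + p a) '' A) with hSp
  set Sm := sSup ((fun a => h a - p a) '' A) with hSm
  set Tp := sSup ((fun a => h a + q a) '' A) with hTp'
  set Tm := sSup ((fun a => h a - q a) '' A) with hTm'
  have hTp : ∀ a ∈ A, h a + q a ≤ Tp := fun a ha => le_csSup bTp ⟨a, ha, rfl⟩
  have hTm : ∀ a ∈ A, h a - q a ≤ Tm := fun a ha => le_csSup bTm ⟨a, ha, rfl⟩
  have hsum : Sp + Sm ≤ Tp + Tm := by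
    have hmain : Sp ≤ Tp + Tm - Sm := by
      refine csSup_le (hA.image _) ?_
      rintro _ ⟨a, ha, rfl⟩
      simp only
      have hSmle : Sm ≤ Tp + Tm - (h a + p a) := by
        refine csSup_le (hA.image _) ?_
        rintro _ ⟨b, hb, rfl⟩
        simp only
        have hd := hpq a ha b hb
        rcases le_total (q b) (q a) with hq | hq
        · have e1 := hTp a ha; have e2 := hTm b hb
          have hle : p a - p b ≤ q a - q b :=
            le_trans (le_abs_self _) (hd.trans_eq (abs_of_nonneg (by linarith)))
          linarith
        · have e1 := hTp b hb; have e2 := hTm a ha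
          have hd' : |p a - p b| ≤ |q b - q a| := by rwa [abs_sub_comm (q a) (q b)] at hd
          have hle : p a - p b ≤ q b - q a :=
            le_trans (le_abs_self _) (hd'.trans_eq (abs_of_nonneg (by linarith)))
          linarith
      linarith
    linarith
  have hSpmax : Sp ≤ max Tp Tm := by
    refine csSup_le (hA.image _) ?_
    rintro _ ⟨a, ha, rfl⟩
    simp only
    rcases le_total 0 (q a) with hq | hq
    · have hle : p a ≤ q a := (le_abs_self _).trans ((hp0 a ha).trans_eq (abs_of_nonneg hq))
      exact le_max_of_le_left (by linarith [hTp a ha])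
    · have hle : p a ≤ -q a := (le_abs_self _).trans ((hp0 a ha).trans_eq (abs_of_nonpos hq))
      exact le_max_of_le_right (by linarith [hTm a ha])
  have hSmmax : Sm ≤ max Tp Tm := by
    refine csSup_le (hA.image _) ?_
    rintro _ ⟨a, ha, rfl⟩
    simp only
    rcases le_total 0 (q a) with hq | hq
    · have hle : -p a ≤ q a := (neg_le_abs _).trans ((hp0 a ha).trans_eq (abs_of_nonneg hq))
      exact le_max_of_le_left (by linarith [hTp a ha])
    · have hle : -p a ≤ -q a := (neg_le_abs _).trans ((hp0 a ha).trans_eq (abs_of_nonpos hq))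
      exact le_max_of_le_right (by linarith [hTm a ha])
  exact lemA hm hc hsum hSpmax hSmmax

end GCaux

namespace GCaux2

lemma map_eval_pi {n : ℕ} (i : Fin n) :
    (Measure.pi fun _ : Fin n => gaussianReal 0 1).map (Function.eval i) = gaussianReal 0 1 := by
  ext s hs
  rw [Measure.map_apply (measurable_pi_apply i) hs]
  have hpre : (fun f : Fin n → ℝ => f i) ⁻¹' s
      = Set.pi Set.univ (Function.update (fun _ => Set.univ) i s) := Set.eval_preimage
  rw [hpre, Measure.pi_pi]
  rw [Finset.prod_eq_single i]
  · rw [Function.update_self]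
  · intro j _ hj; rw [Function.update_of_ne hj]; simp
  · simp

lemma integrable_id_gaussian : Integrable (fun x : ℝ => x) (gaussianReal 0 1) := by
  rw [gaussianReal_of_var_ne_zero _ one_ne_zero]
  rw [integrable_withDensity_iff (measurable_gaussianPDF _ _)
    (ae_of_all _ fun x => ENNReal.ofReal_lt_top)]
  have hbase : Integrable (fun x : ℝ => x ^ (1:ℝ) * rexp (-(1/2) * x ^ 2)) volume :=
    integrable_rpow_mul_exp_neg_mul_sq (by norm_num) (by norm_num)
  simp_rw [Real.rpow_one] at hbase
  have hbase2 : Integrable (fun x : ℝ => (√(2 * π))⁻¹ * |x * rexp (-(1/2) * x ^ 2)|) volume :=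
    hbase.abs.const_mul _
  refine hbase2.mono' ?_ (ae_of_all _ fun x => ?_)
  · exact (measurable_id.mul (measurable_gaussianPDF 0 1).ennreal_toReal).aestronglyMeasurable
  · have hpdf : (gaussianPDF 0 1 x).toReal = gaussianPDFReal 0 1 x :=
      ENNReal.toReal_ofReal (gaussianPDFReal_nonneg _ _ _)
    rw [Real.norm_eq_abs, hpdf, gaussianPDFReal]
    have h1 : ((1:ℝ≥0):ℝ) = (1:ℝ) := rfl
    rw [h1]
    have : -(x - 0) ^ 2 / (2 * 1) = -(1/2) * x ^ 2 := by ring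
    rw [this, abs_mul, abs_mul, abs_of_nonneg (inv_nonneg.mpr (Real.sqrt_nonneg _))]
    rw [mul_one, abs_mul, abs_of_nonneg (Real.exp_pos _).le]
    rw [mul_comm |x|]
    exact le_of_eq (by ring)

lemma neg_mp : MeasurePreserving (fun x : ℝ => -x) (gaussianReal 0 1) (gaussianReal 0 1) := by
  constructor
  · exact measurable_neg
  · have := gaussianReal_map_const_mul (μ := 0) (v := 1) (-1)
    simp only [neg_mul, one_mul, mul_zero] at this
    have h2 : (⟨(-1:ℝ)^2, sq_nonneg _⟩ : ℝ≥0) * 1 = 1 := by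
      ext; norm_num
    rw [this]; congr 1

def flipv {n : ℕ} (σ : Fin n → Bool) (ξ : Fin n → ℝ) : Fin n → ℝ :=
  fun i => (if σ i then (1:ℝ) else -1) * ξ i

lemma flipv_mp {n : ℕ} (σ : Fin n → Bool) :
    MeasurePreserving (flipv σ) (Measure.pi fun _ : Fin n => gaussianReal 0 1)
      (Measure.pi fun _ : Fin n => gaussianReal 0 1) := by
  have := measurePreserving_pi (fun _ : Fin n => gaussianReal 0 1)
    (fun _ : Fin n => gaussianReal 0 1)
    (f := fun i => fun x : ℝ => (if σ i then (1:ℝ) else -1) * x) (fun i => ?_)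
  · exact this
  · cases hσ : σ i
    · have he : (fun x : ℝ => (if (false : Bool) then (1:ℝ) else -1) * x) = (fun x : ℝ => -x) := by
        funext x; simp
      rw [he]; exact neg_mp
    · have he : (fun x : ℝ => (if (true : Bool) then (1:ℝ) else -1) * x) = (fun x : ℝ => x) := by
        funext x; simp
      rw [he]; exact MeasurePreserving.id _

lemma flipv_invol {n : ℕ} (σ : Fin n → Bool) : Function.Involutive (flipv σ) := by
  intro ξ; funext i; cases hσ : σ i <;> simp [flipv, hσ]

noncomputable def flipe {n : ℕ} (σ : Fin n → Bool) : (Fin n → ℝ) ≃ᵐ (Fin n → ℝ) where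
  toEquiv := (flipv_invol σ).toPerm
  measurable_toFun := by
    exact measurable_pi_lambda _ fun i => ((measurable_pi_apply i).const_mul _)
  measurable_invFun := by
    exact measurable_pi_lambda _ fun i => ((measurable_pi_apply i).const_mul _)

end GCaux2

namespace GC

noncomputable def vsum {n : ℕ} (φ : ℝ → ℝ) (c : Fin n → Bool) (ξ a : Fin n → ℝ) : ℝ :=
  ∑ i, ξ i * (_root_.cond (c i) (φ (a i)) (a i))

noncomputable def fc {n : ℕ} (φ G : ℝ → ℝ) (A : Set (Fin n → ℝ)) (c : Fin n → Bool)
    (ξ : Fin n → ℝ) : ℝ :=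
  sSup ((fun a => G (vsum φ c ξ a)) '' A)


theorem main_core {n : ℕ} {A : Set (Fin n → ℝ)} (hA : A.Nonempty)
    {φ : ℝ → ℝ} (hφ : LipschitzWith 1 φ) (hφ0 : φ 0 = 0)
    {G : ℝ → ℝ} (hGmono : Monotone G) (hGconv : ConvexOn ℝ Set.univ G)
    (hUnb : ∀ B : ℝ, ∃ x, B < G x)
    (hbdd2 : ∀ ξ : Fin n → ℝ, BddAbove ((fun a => G (∑ i, ξ i * a i)) '' A))
    (hint2 : Integrable (fc φ G A (fun _ => false))
      (Measure.pi fun _ : Fin n => gaussianReal 0 1)) :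
    ∀ c : Fin n → Bool,
      ∫ ξ, fc φ G A c ξ ∂(Measure.pi fun _ : Fin n => gaussianReal 0 1)
        ≤ ∫ ξ, fc φ G A (fun _ => false) ξ ∂(Measure.pi fun _ : Fin n => gaussianReal 0 1) := by
  set Pm := (Measure.pi fun _ : Fin n => gaussianReal 0 1) with hPm
  have Gcont : Continuous G := by
    rw [← continuousOn_univ]
    simpa using hGconv.continuousOn isOpen_univ
  have hφabs : ∀ t : ℝ, |φ t| ≤ |t| := by
    intro t
    have := hφ.dist_le_mul t 0
    simpa [hφ0, Real.dist_eq] using this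
  obtain ⟨a₀, ha₀⟩ := hA
  set m := G 1 - G 0 with hmdef
  have hm0 : 0 ≤ m := by have := hGmono (by norm_num : (0:ℝ) ≤ 1); simp [hmdef]; linarith
  -- affine lower bound for G
  have Gaff : ∀ y : ℝ, G 0 + m * y - m ≤ G y := by
    intro y
    rcases le_or_gt y 0 with hy | hy
    · rcases eq_or_lt_of_le hy with hy0 | hy0
      · subst hy0; simp; linarith
      · have hsec := hGconv.secant_mono (mem_univ (0:ℝ)) (mem_univ y) (mem_univ (1:ℝ))
          hy0.ne (by norm_num) (by linarith)
        simp only [sub_zero] at hsec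
        -- (G y - G 0)/y ≤ (G 1 - G 0)/1
        rw [div_one] at hsec
        have h2 : m * y ≤ G y - G 0 := by
          have := mul_le_mul_of_nonpos_right hsec (le_of_lt hy0)
          rw [div_mul_cancel₀ _ hy0.ne] at this
          calc m * y = (G 1 - G 0) * y := by rw [hmdef]
          _ ≤ G y - G 0 := this
        linarith
    · rcases le_or_gt y 1 with hy1 | hy1
      · have h1 : G 0 ≤ G y := hGmono hy.le
        have h2 : m * y ≤ m := by
          calc m * y ≤ m * 1 := mul_le_mul_of_nonneg_left hy1 hm0
          _ = m := mul_one m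
        linarith
      · have hsec := hGconv.secant_mono (mem_univ (0:ℝ)) (mem_univ (1:ℝ)) (mem_univ y)
          (by norm_num) (by positivity) hy1.le
        simp only [sub_zero, div_one] at hsec
        -- m ≤ (G y - G 0)/y
        have h2 : m * y ≤ G y - G 0 := by
          have := mul_le_mul_of_nonneg_right hsec (by positivity : (0:ℝ) ≤ y)
          rw [div_mul_cancel₀ _ (by positivity : y ≠ 0)] at this
          rw [hmdef]; exact this
        linarith
  -- inner linear sets are bounded above
  have bdd_lin : ∀ ξ : Fin n → ℝ,
      BddAbove ((fun a => vsum φ (fun _ => false) ξ a) '' A) := by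
    intro ξ
    obtain ⟨B, hB⟩ := hbdd2 ξ
    obtain ⟨x₀, hx₀⟩ := hUnb B
    refine ⟨x₀, ?_⟩
    rintro _ ⟨a, ha, rfl⟩
    simp only
    by_contra hlt
    push_neg at hlt
    have h1 : G x₀ ≤ G (vsum φ (fun _ => false) ξ a) := hGmono hlt.le
    have h2 : G (vsum φ (fun _ => false) ξ a) ≤ B := by
      have : G (∑ i, ξ i * a i) ≤ B := hB ⟨a, ha, rfl⟩
      exact this
    linarith
  -- pointwise domination of mixed sums by sign-flipped linear suprema
  have ptbd : ∀ (c : Fin n → Bool) (ξ : Fin n → ℝ), ∀ a ∈ A, ∃ ε : Fin n → Bool,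
      vsum φ c ξ a ≤ sSup ((fun b => vsum φ (fun _ => false) (GCaux2.flipv ε ξ) b) '' A) := by
    intro c ξ a ha
    refine ⟨fun i => decide (0 ≤ ξ i * a i), ?_⟩
    have hle : vsum φ c ξ a ≤ vsum φ (fun _ => false) (GCaux2.flipv (fun i => decide (0 ≤ ξ i * a i)) ξ) a := by
      unfold vsum GCaux2.flipv
      refine Finset.sum_le_sum fun i _ => ?_
      have habs : |_root_.cond (c i) (φ (a i)) (a i)| ≤ |a i| := by
        cases c i
        · simp
        · simpa using hφabs (a i)
      have h1 : ξ i * _root_.cond (c i) (φ (a i)) (a i) ≤ |ξ i| * |a i| := by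
        calc ξ i * _root_.cond (c i) (φ (a i)) (a i) ≤ |ξ i * _root_.cond (c i) (φ (a i)) (a i)| :=
              le_abs_self _
        _ = |ξ i| * |_root_.cond (c i) (φ (a i)) (a i)| := abs_mul _ _
        _ ≤ |ξ i| * |a i| := mul_le_mul_of_nonneg_left habs (abs_nonneg _)
      show ξ i * _root_.cond (c i) (φ (a i)) (a i)
          ≤ (if decide (0 ≤ ξ i * a i) = true then (1:ℝ) else -1) * ξ i * a i
      rcases le_or_gt 0 (ξ i * a i) with hq | hq
      · rw [if_pos (decide_eq_true hq)]
        calc ξ i * _root_.cond (c i) (φ (a i)) (a i) ≤ |ξ i| * |a i| := h1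
        _ = |ξ i * a i| := (abs_mul _ _).symm
        _ = ξ i * a i := abs_of_nonneg hq
        _ = 1 * ξ i * a i := by ring
      · rw [if_neg (by rw [decide_eq_false (not_le.mpr hq)]; exact Bool.false_ne_true)]
        calc ξ i * _root_.cond (c i) (φ (a i)) (a i) ≤ |ξ i| * |a i| := h1
        _ = |ξ i * a i| := (abs_mul _ _).symm
        _ = -(ξ i * a i) := abs_of_neg hq
        _ = -1 * ξ i * a i := by ring
    exact hle.trans (le_csSup (bdd_lin _) ⟨a, ha, rfl⟩)
  -- mixed inner sets are bounded above
  have bdd_mixed : ∀ (c : Fin n → Bool) (ξ : Fin n → ℝ),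
      BddAbove ((fun a => vsum φ c ξ a) '' A) := by
    intro c ξ
    refine ⟨∑ ε : Fin n → Bool,
      |sSup ((fun b => vsum φ (fun _ => false) (GCaux2.flipv ε ξ) b) '' A)|, ?_⟩
    rintro _ ⟨a, ha, rfl⟩
    simp only
    obtain ⟨ε, hε⟩ := ptbd c ξ a ha
    refine hε.trans ((le_abs_self _).trans ?_)
    exact Finset.single_le_sum
      (f := fun ε => |sSup ((fun b => vsum φ (fun _ => false) (GCaux2.flipv ε ξ) b) '' A)|)
      (fun _ _ => abs_nonneg _) (Finset.mem_univ ε)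
  have bddG : ∀ (c : Fin n → Bool) (ξ : Fin n → ℝ),
      BddAbove ((fun a => G (vsum φ c ξ a)) '' A) := by
    intro c ξ
    obtain ⟨B, hB⟩ := bdd_mixed c ξ
    refine ⟨G B, ?_⟩
    rintro _ ⟨a, ha, rfl⟩
    exact hGmono (hB ⟨a, ha, rfl⟩)
  have hAne : A.Nonempty := ⟨a₀, ha₀⟩
  -- fc as G of inner sup
  have fc_eq : ∀ (c : Fin n → Bool) (ξ : Fin n → ℝ),
      fc φ G A c ξ = G (sSup ((fun a => vsum φ c ξ a) '' A)) := by
    intro c ξ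
    rw [fc, show (fun a => G (vsum φ c ξ a)) '' A = G '' ((fun a => vsum φ c ξ a) '' A) from
      (Set.image_image _ _ _).symm]
    exact (Monotone.map_csSup_of_continuousAt Gcont.continuousAt hGmono (hAne.image _)
      (bdd_mixed c ξ)).symm
  -- upper bound for fc
  have fc_le : ∀ (c : Fin n → Bool) (ξ : Fin n → ℝ),
      fc φ G A c ξ ≤ ∑ ε : Fin n → Bool, |fc φ G A (fun _ => false) (GCaux2.flipv ε ξ)| := by
    intro c ξ
    refine csSup_le (hAne.image _) ?_
    rintro _ ⟨a, ha, rfl⟩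
    simp only
    obtain ⟨ε, hε⟩ := ptbd c ξ a ha
    have h1 : G (vsum φ c ξ a) ≤ fc φ G A (fun _ => false) (GCaux2.flipv ε ξ) := by
      rw [fc_eq]
      exact hGmono hε
    refine h1.trans ((le_abs_self _).trans ?_)
    exact Finset.single_le_sum
      (f := fun ε => |fc φ G A (fun _ => false) (GCaux2.flipv ε ξ)|)
      (fun _ _ => abs_nonneg _) (Finset.mem_univ ε)
  -- lower bound for fc
  have fc_ge : ∀ (c : Fin n → Bool) (ξ : Fin n → ℝ),
      G 0 - m - m * (∑ i, |ξ i| * |a₀ i|) ≤ fc φ G A c ξ := by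
    intro c ξ
    have h1 : -(∑ i, |ξ i| * |a₀ i|) ≤ vsum φ c ξ a₀ := by
      rw [← Finset.sum_neg_distrib]
      refine Finset.sum_le_sum fun i _ => ?_
      have habs : |_root_.cond (c i) (φ (a₀ i)) (a₀ i)| ≤ |a₀ i| := by
        cases c i
        · simp
        · simpa using hφabs (a₀ i)
      have := neg_abs_le (ξ i * _root_.cond (c i) (φ (a₀ i)) (a₀ i))
      have h2 : |ξ i * _root_.cond (c i) (φ (a₀ i)) (a₀ i)| ≤ |ξ i| * |a₀ i| := by
        rw [abs_mul]
        exact mul_le_mul_of_nonneg_left habs (abs_nonneg _)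
      linarith
    have h2 : G 0 + m * vsum φ c ξ a₀ - m ≤ G (vsum φ c ξ a₀) := Gaff _
    have h3 : G (vsum φ c ξ a₀) ≤ fc φ G A c ξ := le_csSup (bddG c ξ) ⟨a₀, ha₀, rfl⟩
    have h4 : m * (-(∑ i, |ξ i| * |a₀ i|)) ≤ m * vsum φ c ξ a₀ :=
      mul_le_mul_of_nonneg_left h1 hm0
    linarith
  -- measurability of fc
  have fc_meas : ∀ c : Fin n → Bool, Measurable (fc φ G A c) := by
    intro c
    have hlsc : LowerSemicontinuous (fc φ G A c) := by
      intro ξ₀ y hy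
      obtain ⟨_, ⟨a, ha, rfl⟩, hlt⟩ := exists_lt_of_lt_csSup (hAne.image _) hy
      simp only at hlt
      have hcont : Continuous fun ξ : Fin n → ℝ => G (vsum φ c ξ a) := by
        refine Gcont.comp ?_
        unfold vsum
        exact continuous_finset_sum _ fun i _ => (continuous_apply i).mul continuous_const
      have hopen : IsOpen {ξ : Fin n → ℝ | y < G (vsum φ c ξ a)} :=
        isOpen_lt continuous_const hcont
      filter_upwards [hopen.mem_nhds hlt] with ξ hξ
      exact lt_of_lt_of_le hξ (le_csSup (bddG c ξ) ⟨a, ha, rfl⟩)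
    exact hlsc.measurable
  -- integrability of coordinates
  have int_coord : ∀ i : Fin n, Integrable (fun ξ : Fin n → ℝ => ξ i) Pm := by
    intro i
    have hmap : Pm.map (Function.eval i) = gaussianReal 0 1 := by
      rw [hPm]; exact GCaux2.map_eval_pi i
    have h1 : Integrable (fun x : ℝ => x) (Pm.map (Function.eval i)) := by
      rw [hmap]; exact GCaux2.integrable_id_gaussian
    have h2 : AEStronglyMeasurable (fun x : ℝ => x) (Pm.map (Function.eval i)) := by
      rw [hmap]; exact measurable_id.aestronglyMeasurable
    exact (integrable_map_measure h2 (measurable_pi_apply i).aemeasurable).mp h1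
  -- integrability of fc
  have fc_int : ∀ c : Fin n → Bool, Integrable (fc φ G A c) Pm := by
    intro c
    have intE : Integrable (fun ξ : Fin n → ℝ => ∑ i, |ξ i| * |a₀ i|) Pm :=
      integrable_finset_sum _ fun i _ => ((int_coord i).abs.mul_const _)
    have intD : Integrable
        (fun ξ : Fin n → ℝ => ∑ ε : Fin n → Bool,
          |fc φ G A (fun _ => false) (GCaux2.flipv ε ξ)|) Pm := by
      refine integrable_finset_sum _ fun ε _ => ?_
      have : Integrable (fc φ G A (fun _ => false) ∘ GCaux2.flipv ε) Pm :=
        ((GCaux2.flipv_mp ε).integrable_comp hint2.aestronglyMeasurable).mpr hint2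
      exact this.abs
    have intW : Integrable (fun ξ : Fin n → ℝ => (|G 0| + m) + m * (∑ i, |ξ i| * |a₀ i|)
        + ∑ ε : Fin n → Bool, |fc φ G A (fun _ => false) (GCaux2.flipv ε ξ)|) Pm :=
      ((integrable_const _).add (intE.const_mul m)).add intD
    refine intW.mono' (fc_meas c).aestronglyMeasurable (ae_of_all _ fun ξ => ?_)
    rw [Real.norm_eq_abs, abs_le]
    have hE0 : 0 ≤ ∑ i, |ξ i| * |a₀ i| :=
      Finset.sum_nonneg fun i _ => mul_nonneg (abs_nonneg _) (abs_nonneg _)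
    have hD0 : 0 ≤ ∑ ε : Fin n → Bool, |fc φ G A (fun _ => false) (GCaux2.flipv ε ξ)| :=
      Finset.sum_nonneg fun ε _ => abs_nonneg _
    constructor
    · have := fc_ge c ξ
      have habs : -(|G 0| + m) ≤ G 0 - m := by
        have := abs_nonneg (G 0); have := neg_abs_le (G 0); linarith
      nlinarith [mul_nonneg hm0 hE0]
    · have := fc_le c ξ
      nlinarith [mul_nonneg hm0 hE0, abs_nonneg (G 0)]
  -- the key one-coordinate step
  have key_step : ∀ (c : Fin n → Bool) (j : Fin n), c j = false →
      ∫ ξ, fc φ G A (Function.update c j true) ξ ∂Pm ≤ ∫ ξ, fc φ G A c ξ ∂Pm := by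
    intro c j hcj
    set c' := Function.update c j true with hc'
    set σ : Fin n → Bool := fun i => !(decide (i = j)) with hσ
    have hflip_j : ∀ ξ : Fin n → ℝ, GCaux2.flipv σ ξ j = -ξ j := by
      intro ξ; simp [GCaux2.flipv, hσ]
    have hflip_ne : ∀ (ξ : Fin n → ℝ) (i : Fin n), i ≠ j → GCaux2.flipv σ ξ i = ξ i := by
      intro ξ i hi; simp [GCaux2.flipv, hσ, hi]
    have pointwise : ∀ ξ : Fin n → ℝ,
        fc φ G A c' ξ + fc φ G A c' (GCaux2.flipv σ ξ)
          ≤ fc φ G A c ξ + fc φ G A c (GCaux2.flipv σ ξ) := by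
      intro ξ
      set hfun : (Fin n → ℝ) → ℝ :=
        fun a => ∑ i ∈ Finset.univ.erase j, ξ i * _root_.cond (c i) (φ (a i)) (a i) with hhfun
      set p : (Fin n → ℝ) → ℝ := fun a => ξ j * φ (a j) with hp
      set q : (Fin n → ℝ) → ℝ := fun a => ξ j * (a j) with hq
      have esum : ∀ (η : Fin n → ℝ) (d : Fin n → Bool) (a : Fin n → ℝ),
          vsum φ d η a = (∑ i ∈ Finset.univ.erase j, η i * _root_.cond (d i) (φ (a i)) (a i))
            + η j * _root_.cond (d j) (φ (a j)) (a j) := by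
        intro η d a
        rw [vsum, ← Finset.sum_erase_add Finset.univ _ (Finset.mem_univ j)]
      have id1 : (fun a => vsum φ c' ξ a) = fun a => hfun a + p a := by
        funext a
        rw [esum]
        congr 1
        · rw [hhfun]
          refine Finset.sum_congr rfl fun i hi => ?_
          rw [hc', Function.update_of_ne (Finset.mem_erase.mp hi).1]
        · rw [hc', hp, Function.update_self]
          rfl
      have id2 : (fun a => vsum φ c' (GCaux2.flipv σ ξ) a) = fun a => hfun a - p a := by
        funext a
        rw [esum, sub_eq_add_neg]
        congr 1
        · rw [hhfun]
          refine Finset.sum_congr rfl fun i hi => ?_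
          rw [hc', Function.update_of_ne (Finset.mem_erase.mp hi).1,
            hflip_ne ξ i (Finset.mem_erase.mp hi).1]
        · rw [hc', hp, Function.update_self, hflip_j]
          show -ξ j * φ (a j) = -(ξ j * φ (a j))
          ring
      have id3 : (fun a => vsum φ c ξ a) = fun a => hfun a + q a := by
        funext a
        rw [esum]
        congr 1
        rw [hcj, hq]
        rfl
      have id4 : (fun a => vsum φ c (GCaux2.flipv σ ξ) a) = fun a => hfun a - q a := by
        funext a
        rw [esum, sub_eq_add_neg]
        congr 1
        · rw [hhfun]
          refine Finset.sum_congr rfl fun i hi => ?_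
          rw [hflip_ne ξ i (Finset.mem_erase.mp hi).1]
        · rw [hcj, hq, hflip_j]
          show -ξ j * (a j) = -(ξ j * a j)
          ring
      have e1 : fc φ G A c' ξ = G (sSup ((fun a => hfun a + p a) '' A)) := by
        rw [fc_eq, id1]
      have e2 : fc φ G A c' (GCaux2.flipv σ ξ) = G (sSup ((fun a => hfun a - p a) '' A)) := by
        rw [fc_eq, id2]
      have e3 : fc φ G A c ξ = G (sSup ((fun a => hfun a + q a) '' A)) := by
        rw [fc_eq, id3]
      have e4 : fc φ G A c (GCaux2.flipv σ ξ) = G (sSup ((fun a => hfun a - q a) '' A)) := by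
        rw [fc_eq, id4]
      rw [e1, e2, e3, e4]
      refine GCaux.key_sup hAne hGmono hGconv hfun p q ?_ ?_ ?_ ?_
      · intro s _ t _
        rw [hp, hq]
        have h1 : |ξ j * φ (s j) - ξ j * φ (t j)| = |ξ j| * |φ (s j) - φ (t j)| := by
          rw [← mul_sub, abs_mul]
        have h2 : |ξ j * s j - ξ j * t j| = |ξ j| * |s j - t j| := by
          rw [← mul_sub, abs_mul]
        rw [h1, h2]
        refine mul_le_mul_of_nonneg_left ?_ (abs_nonneg _)
        have := hφ.dist_le_mul (s j) (t j)
        simpa [Real.dist_eq] using this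
      · intro s _
        rw [hp, hq, abs_mul, abs_mul]
        exact mul_le_mul_of_nonneg_left (hφabs _) (abs_nonneg _)
      · rw [← id3]; exact bdd_mixed c ξ
      · rw [← id4]; exact bdd_mixed c (GCaux2.flipv σ ξ)
    -- now integrate
    have mpσ := GCaux2.flipv_mp (n := n) σ
    have intc' : Integrable (fc φ G A c') Pm := fc_int c'
    have intc : Integrable (fc φ G A c) Pm := fc_int c
    have intc'f : Integrable (fun ξ => fc φ G A c' (GCaux2.flipv σ ξ)) Pm :=
      (mpσ.integrable_comp intc'.aestronglyMeasurable).mpr intc'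
    have intcf : Integrable (fun ξ => fc φ G A c (GCaux2.flipv σ ξ)) Pm :=
      (mpσ.integrable_comp intc.aestronglyMeasurable).mpr intc
    have e1 : ∫ ξ, fc φ G A c' (GCaux2.flipv σ ξ) ∂Pm = ∫ ξ, fc φ G A c' ξ ∂Pm :=
      mpσ.integral_comp (GCaux2.flipe σ).measurableEmbedding _
    have e2 : ∫ ξ, fc φ G A c (GCaux2.flipv σ ξ) ∂Pm = ∫ ξ, fc φ G A c ξ ∂Pm :=
      mpσ.integral_comp (GCaux2.flipe σ).measurableEmbedding _
    have hmono : ∫ ξ, (fc φ G A c' ξ + fc φ G A c' (GCaux2.flipv σ ξ)) ∂Pm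
        ≤ ∫ ξ, (fc φ G A c ξ + fc φ G A c (GCaux2.flipv σ ξ)) ∂Pm :=
      integral_mono (intc'.add intc'f) (intc.add intcf) fun ξ => pointwise ξ
    rw [integral_add intc' intc'f, integral_add intc intcf, e1, e2] at hmono
    linarith
  -- induction on the number of contracted coordinates
  have main : ∀ (k : ℕ) (c : Fin n → Bool),
      (Finset.univ.filter (fun i => c i = true)).card ≤ k →
      ∫ ξ, fc φ G A c ξ ∂Pm ≤ ∫ ξ, fc φ G A (fun _ => false) ξ ∂Pm := by
    intro k
    induction k with
    | zero =>
      intro c hc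
      have hall : ∀ i, c i = false := by
        intro i
        by_contra hne
        have hi : c i = true := by
          cases hci : c i
          · exact absurd hci hne
          · rfl
        have : i ∈ Finset.univ.filter (fun i => c i = true) := by
          simp [hi]
        have := Finset.card_pos.mpr ⟨i, this⟩
        omega
      have : c = fun _ => false := funext hall
      rw [this]
    | succ k ih =>
      intro c hc
      by_cases hall : ∀ i, c i = false
      · have : c = fun _ => false := funext hall
        rw [this]
      · push_neg at hall
        obtain ⟨j, hj⟩ := hall
        have hjt : c j = true := by
          cases hcj : c j
          · exact absurd hcj hj
          · rfl
        set c₀ := Function.update c j false with hc₀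
        have hc₀j : c₀ j = false := Function.update_self _ _ _
        have hcc : Function.update c₀ j true = c := by
          funext i
          by_cases hi : i = j
          · subst hi
            rw [Function.update_self, hjt]
          · rw [Function.update_of_ne hi, hc₀, Function.update_of_ne hi]
        have step := key_step c₀ j hc₀j
        rw [hcc] at step
        refine step.trans (ih c₀ ?_)
        have hsub : Finset.univ.filter (fun i => c₀ i = true)
            ⊆ (Finset.univ.filter (fun i => c i = true)).erase j := by
          intro i hi
          rw [Finset.mem_filter] at hi
          rw [Finset.mem_erase, Finset.mem_filter]
          have hij : i ≠ j := by
            intro h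
            rw [h, hc₀j] at hi
            simp at hi
          refine ⟨hij, Finset.mem_univ i, ?_⟩
          rw [hc₀, Function.update_of_ne hij] at hi
          exact hi.2
        have hjmem : j ∈ Finset.univ.filter (fun i => c i = true) := by simp [hjt]
        have h1 := Finset.card_le_card hsub
        rw [Finset.card_erase_of_mem hjmem] at h1
        omega
  exact fun c => main _ c le_rfl

end GC

/-- **Gaussian contraction.** For i.i.d. standard Gaussians
`ξ₁,…,ξₙ`, a `1`-Lipschitz `φ` with `φ(0)=0`, and `G` nondecreasing and convex,
`E[sup_{a∈A} G(∑ᵢ ξᵢ φ(aᵢ))] ≤ E[sup_{a∈A} G(∑ᵢ ξᵢ aᵢ)]`. -/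
theorem gaussian_contraction_inequality
    (n : ℕ) (A : Set (Fin n → ℝ)) (hA : A.Nonempty)
    (φ : ℝ → ℝ) (hφ : LipschitzWith 1 φ) (hφ0 : φ 0 = 0)
    (G : ℝ → ℝ) (hGmono : Monotone G) (hGconv : ConvexOn ℝ Set.univ G)
    (hbdd1 : ∀ ξ : Fin n → ℝ, BddAbove ((fun a => G (∑ i, ξ i * φ (a i))) '' A))
    (hbdd2 : ∀ ξ : Fin n → ℝ, BddAbove ((fun a => G (∑ i, ξ i * a i)) '' A))
    (hint1 : Integrable (fun ξ : Fin n → ℝ => sSup ((fun a => G (∑ i, ξ i * φ (a i))) '' A))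
      (Measure.pi fun _ : Fin n => gaussianReal 0 1))
    (hint2 : Integrable (fun ξ : Fin n → ℝ => sSup ((fun a => G (∑ i, ξ i * a i)) '' A))
      (Measure.pi fun _ : Fin n => gaussianReal 0 1)) :
    ∫ ξ : Fin n → ℝ, sSup ((fun a => G (∑ i, ξ i * φ (a i))) '' A)
        ∂(Measure.pi fun _ : Fin n => gaussianReal 0 1)
      ≤ ∫ ξ : Fin n → ℝ, sSup ((fun a => G (∑ i, ξ i * a i)) '' A)
        ∂(Measure.pi fun _ : Fin n => gaussianReal 0 1) := by
  by_cases hconst : ∀ x y : ℝ, G x = G y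
  · have he : (fun ξ : Fin n → ℝ => sSup ((fun a => G (∑ i, ξ i * φ (a i))) '' A))
        = fun ξ : Fin n → ℝ => sSup ((fun a => G (∑ i, ξ i * a i)) '' A) := by
      funext ξ
      have h1 : (fun a : Fin n → ℝ => G (∑ i, ξ i * φ (a i))) = fun _ => G 0 :=
        funext fun a => hconst _ 0
      have h2 : (fun a : Fin n → ℝ => G (∑ i, ξ i * a i)) = fun _ => G 0 :=
        funext fun a => hconst _ 0
      rw [h1, h2]
    rw [he]
  · push_neg at hconst
    obtain ⟨x, y, hxy⟩ := hconst
    obtain ⟨u, v, huv, hGuv⟩ : ∃ u v : ℝ, u < v ∧ G u < G v := by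
      rcases lt_trichotomy x y with h | h | h
      · exact ⟨x, y, h, lt_of_le_of_ne (hGmono h.le) hxy⟩
      · exact absurd (congrArg G h) hxy
      · exact ⟨y, x, h, lt_of_le_of_ne (hGmono h.le) (Ne.symm hxy)⟩
    have hUnb : ∀ B : ℝ, ∃ z, B < G z := by
      intro B
      rcases lt_or_ge B (G v) with hB | hB
      · exact ⟨v, hB⟩
      · set s := (G v - G u) / (v - u) with hsdef
        have hs : 0 < s := div_pos (by linarith) (by linarith)
        refine ⟨v + (B - G v) / s + 1, ?_⟩
        have hnn : 0 ≤ (B - G v) / s := div_nonneg (by linarith) hs.le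
        have hvz : v ≤ v + (B - G v) / s + 1 := by linarith
        have hsec := hGconv.secant_mono (Set.mem_univ u) (Set.mem_univ v)
          (Set.mem_univ (v + (B - G v) / s + 1)) huv.ne'
          ((by linarith : u < v + (B - G v) / s + 1).ne') hvz
        rw [← hsdef] at hsec
        have hzu : 0 < v + (B - G v) / s + 1 - u := by linarith
        have h2 : s * (v + (B - G v) / s + 1 - u) ≤ G (v + (B - G v) / s + 1) - G u :=
          (le_div_iff₀ hzu).mp hsec
        have e1 : s * (v - u) = G v - G u := by
          rw [hsdef, div_mul_cancel₀ _ (sub_ne_zero.mpr huv.ne')]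
        have e2 : s * ((B - G v) / s) = B - G v := by
          rw [mul_comm, div_mul_cancel₀ _ hs.ne']
        have e3 : s * (v + (B - G v) / s + 1 - u)
            = s * (v - u) + s * ((B - G v) / s) + s := by ring
        linarith
    have hint2' : Integrable (GC.fc φ G A (fun _ => false))
        (Measure.pi fun _ : Fin n => gaussianReal 0 1) := hint2
    exact GC.main_core hA hφ hφ0 hGmono hGconv hUnb hbdd2 hint2' (fun _ => true)
end

section
/- Complexity bound for ReLU networks: Let ℱ_{L,V} be the class of depth-L ReLU networks on [−1,1]^d with total path-variation at most V (arbitrary widths), and let X1,…,Xn ∈ [−1,1]^d. Then the empirical Rademacher complexity E[sup_{f∈ℱ_{L,V}} Σᵢ ξᵢ f(Xᵢ)] is at most V·√(2n(L log 2 + log(2d))), where ξᵢ are i.i.d. Rademacher. -/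
open Finset

/-- Expectation over i.i.d. Rademacher signs `ξ ∈ {−1,+1}ⁿ` (uniform). -/
noncomputable def radAvg (n : ℕ) (F : (Fin n → ℝ) → ℝ) : ℝ :=
  (∑ ε : Fin n → Bool, F (fun i => if ε i then 1 else -1)) / 2 ^ n

/-- One network layer applied to a class of functions:
convex combinations of `±ReLU` compositions of members of `F`. -/
noncomputable def reluLayer (d : ℕ) (F : Set ((Fin d → ℝ) → ℝ)) : Set ((Fin d → ℝ) → ℝ) :=
  {g | ∃ (k : ℕ) (c : Fin k → ℝ) (f : Fin k → ((Fin d → ℝ) → ℝ)),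
    (∀ j, f j ∈ F) ∧ (∑ j, |c j| ≤ 1) ∧ ∀ x, g x = ∑ j, c j * max (f j x) 0}

/-- The `2d` signed coordinate functions scaled by `V`. -/
noncomputable def initClass (d : ℕ) (V : ℝ) : Set ((Fin d → ℝ) → ℝ) :=
  {f | ∃ j : Fin d, f = (fun x => V * x j) ∨ f = (fun x => -(V * x j))}

/-- The class `ℱ_{L,V}` of depth-`L` ReLU networks with path-variation at most `V`. -/
noncomputable def deepReluClass (d L : ℕ) (V : ℝ) : Set ((Fin d → ℝ) → ℝ) :=
  (reluLayer d)^[L] (initClass d V)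


-- ### Auxiliary lemmas ###

private lemma exp_four_aux {p q u v : ℝ} (hqp : q ≤ p)
    (hp : p ≤ u) (hpq : p + q ≤ u + v) :
    Real.exp p + Real.exp q ≤ Real.exp u + Real.exp v := by
  rcases le_or_gt q v with h | h
  · exact add_le_add (Real.exp_le_exp.2 hp) (Real.exp_le_exp.2 h)
  · have hvp : v ≤ p := le_trans h.le hqp
    have h1 : Real.exp q ≤ Real.exp (u + v - p) := Real.exp_le_exp.2 (by linarith)
    have e1 : Real.exp (u + v - p) = Real.exp u * Real.exp (v - p) := by
      rw [← Real.exp_add]; ring_nf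
    have e2 : Real.exp v = Real.exp p * Real.exp (v - p) := by
      rw [← Real.exp_add]; ring_nf
    have f1 : Real.exp p ≤ Real.exp u := Real.exp_le_exp.2 hp
    have f2 : Real.exp (v - p) ≤ 1 := Real.exp_le_one_iff.2 (by linarith)
    nlinarith [Real.exp_pos p, Real.exp_pos (v - p)]

private lemma exp_four {p q u v : ℝ} (hp : p ≤ max u v) (hq : q ≤ max u v)
    (hpq : p + q ≤ u + v) : Real.exp p + Real.exp q ≤ Real.exp u + Real.exp v := by
  rcases le_total v u with hvu | huv
  · rw [max_eq_left hvu] at hp hq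
    rcases le_total q p with hqp | hpq'
    · exact exp_four_aux hqp hp hpq
    · rw [add_comm (Real.exp p)]; exact exp_four_aux hpq' hq (by linarith)
  · rw [max_eq_right huv] at hp hq
    rcases le_total q p with hqp | hpq'
    · rw [add_comm (Real.exp u)]; exact exp_four_aux hqp hp (by linarith)
    · rw [add_comm (Real.exp p), add_comm (Real.exp u)]
      exact exp_four_aux hpq' hq (by linarith)

private lemma exp_mul_csSup_le {S : Set ℝ} (hS : S.Nonempty) {l R : ℝ} (hl : 0 < l)
    (h : ∀ s ∈ S, Real.exp (l * s) ≤ R) : Real.exp (l * sSup S) ≤ R := by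
  obtain ⟨s₀, hs₀⟩ := hS
  have hR : 0 < R := lt_of_lt_of_le (Real.exp_pos _) (h s₀ hs₀)
  have hle : sSup S ≤ Real.log R / l := by
    apply csSup_le ⟨s₀, hs₀⟩
    intro s hs
    have h2 : l * s ≤ Real.log R := by
      have := h s hs
      rwa [← Real.exp_log hR, Real.exp_le_exp] at this
    rw [le_div_iff₀ hl]; linarith
  calc Real.exp (l * sSup S) ≤ Real.exp (l * (Real.log R / l)) :=
        Real.exp_le_exp.2 (mul_le_mul_of_nonneg_left hle hl.le)
    _ = R := by rw [mul_div_cancel₀ _ hl.ne', Real.exp_log hR]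

private lemma exp_four_scaled {l p q u v : ℝ} (hl : 0 ≤ l) (hp : p ≤ max u v)
    (hq : q ≤ max u v) (hpq : p + q ≤ u + v) :
    Real.exp (l * p) + Real.exp (l * q) ≤ Real.exp (l * u) + Real.exp (l * v) := by
  have hmax : l * max u v = max (l * u) (l * v) := mul_max_of_nonneg _ _ hl
  apply exp_four
  · rw [← hmax]; exact mul_le_mul_of_nonneg_left hp hl
  · rw [← hmax]; exact mul_le_mul_of_nonneg_left hq hl
  · have := mul_le_mul_of_nonneg_left hpq hl; nlinarith

private lemma core_pair {α : Type*} {S : Set α} (hS : S.Nonempty) {l : ℝ} (hl : 0 < l)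
    (B t : α → ℝ)
    (hbd1 : BddAbove ((fun a => B a + t a) '' S))
    (hbd2 : BddAbove ((fun a => B a - t a) '' S)) :
    Real.exp (l * sSup ((fun a => B a + max (t a) 0) '' S)) +
      Real.exp (l * sSup ((fun a => B a - max (t a) 0) '' S)) ≤
    Real.exp (l * sSup ((fun a => B a + t a) '' S)) +
      Real.exp (l * sSup ((fun a => B a - t a) '' S)) := by
  set u := sSup ((fun a => B a + t a) '' S) with hu_def
  set v := sSup ((fun a => B a - t a) '' S) with hv_def
  have hu : ∀ a ∈ S, B a + t a ≤ u := fun a ha => le_csSup hbd1 ⟨a, ha, rfl⟩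
  have hv : ∀ a ∈ S, B a - t a ≤ v := fun a ha => le_csSup hbd2 ⟨a, ha, rfl⟩
  have key : ∀ a ∈ S, ∀ b ∈ S,
      Real.exp (l * (B a + max (t a) 0)) + Real.exp (l * (B b - max (t b) 0))
        ≤ Real.exp (l * u) + Real.exp (l * v) := by
    intro a ha b hb
    apply exp_four_scaled hl.le
    · rcases le_total (t a) 0 with h | h
      · have : B a + max (t a) 0 = B a := by rw [max_eq_right h, add_zero]
        rw [this]
        exact le_max_of_le_right (by linarith [hv a ha])
      · have : B a + max (t a) 0 = B a + t a := by rw [max_eq_left h]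
        rw [this]; exact le_max_of_le_left (hu a ha)
    · rcases le_total (t b) 0 with h | h
      · have : B b - max (t b) 0 = B b := by rw [max_eq_right h, sub_zero]
        rw [this]; exact le_max_of_le_right (by linarith [hv b hb])
      · have : B b - max (t b) 0 = B b - t b := by rw [max_eq_left h]
        rw [this]; exact le_max_of_le_right (hv b hb)
    · have hLip : |max (t a) 0 - max (t b) 0| ≤ |t a - t b| :=
        abs_max_sub_max_le_abs (t a) (t b) 0
      have h1 : max (t a) 0 - max (t b) 0 ≤ |t a - t b| :=
        le_trans (le_abs_self _) hLip
      rcases le_total (t b) (t a) with h | h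
      · rw [abs_of_nonneg (by linarith : (0:ℝ) ≤ t a - t b)] at h1
        linarith [hu a ha, hv b hb]
      · rw [abs_of_nonpos (by linarith : t a - t b ≤ (0:ℝ))] at h1
        linarith [hu b hb, hv a ha]
  have h2 : ∀ a ∈ S, Real.exp (l * sSup ((fun a => B a - max (t a) 0) '' S))
      ≤ (Real.exp (l * u) + Real.exp (l * v)) - Real.exp (l * (B a + max (t a) 0)) := by
    intro a ha
    apply exp_mul_csSup_le (hS.image _) hl
    rintro s ⟨b, hb, rfl⟩
    linarith [key a ha b hb]
  have h1 : Real.exp (l * sSup ((fun a => B a + max (t a) 0) '' S))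
      ≤ (Real.exp (l * u) + Real.exp (l * v))
        - Real.exp (l * sSup ((fun a => B a - max (t a) 0) '' S)) := by
    apply exp_mul_csSup_le (hS.image _) hl
    rintro s ⟨a, ha, rfl⟩
    linarith [h2 a ha]
  linarith

private lemma bdd_img {α : Type*} {A : Set α} {n : ℕ} (F : Fin n → α → ℝ) {C : ℝ}
    (h : ∀ a ∈ A, ∀ i, F i a ≤ C) : BddAbove ((fun a => ∑ i, F i a) '' A) := by
  refine ⟨n * C, ?_⟩
  rintro s ⟨a, ha, rfl⟩
  calc ∑ i, F i a ≤ ∑ _i : Fin n, C := Finset.sum_le_sum (fun i _ => h a ha i)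
    _ = n * C := by simp [Finset.sum_const, nsmul_eq_mul]

/-- hybrid sup -/
noncomputable def hyb {n : ℕ} (A : Set (Fin n → ℝ)) (m : ℕ) (ε : Fin n → Bool) : ℝ :=
  sSup ((fun a => ∑ i, (if ε i then (1:ℝ) else -1) *
    (if (i : ℕ) < m then a i else max (a i) 0)) '' A)

private lemma step_lemma {n : ℕ} {A : Set (Fin n → ℝ)} (hA : A.Nonempty) {C : ℝ}
    (hC : ∀ a ∈ A, ∀ i, |a i| ≤ C) {l : ℝ} (hl : 0 < l) (k : Fin n) :
    ∑ ε : Fin n → Bool, Real.exp (l * hyb A k ε)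
      ≤ ∑ ε : Fin n → Bool, Real.exp (l * hyb A ((k : ℕ) + 1) ε) := by
  classical
  set φ : (Fin n → Bool) → (Fin n → Bool) := fun ε => Function.update ε k (!(ε k)) with hφ
  have hinv : Function.Involutive φ := by
    intro ε; funext i
    by_cases h : i = k
    · subst h; simp [φ]
    · simp [φ, Function.update_of_ne h]
  have flipsum : ∀ G : (Fin n → Bool) → ℝ, ∑ ε, G (φ ε) = ∑ ε, G ε :=
    fun G => Fintype.sum_bijective φ hinv.bijective _ _ (fun ε => rfl)
  -- pointwise bound
  have main : ∀ ε, Real.exp (l * hyb A k ε) + Real.exp (l * hyb A k (φ ε))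
      ≤ Real.exp (l * hyb A ((k : ℕ) + 1) ε) + Real.exp (l * hyb A ((k : ℕ) + 1) (φ ε)) := by
    intro ε
    set B : (Fin n → ℝ) → ℝ := fun a => ∑ i ∈ univ.erase k,
      (if ε i then (1:ℝ) else -1) * (if (i : ℕ) < (k : ℕ) then a i else max (a i) 0) with hB
    set t : (Fin n → ℝ) → ℝ := fun a => a k with ht
    -- signs off k agree for ε and φ ε
    have hoff : ∀ i ∈ univ.erase k, (if (φ ε) i then (1:ℝ) else -1) = (if ε i then 1 else -1) := by
      intro i hi
      have : i ≠ k := (Finset.mem_erase.1 hi).1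
      simp [φ, Function.update_of_ne this]
    -- expressions for the four sups
    have ek : ∀ (δ : Fin n → Bool), (∀ i ∈ univ.erase k,
          (if δ i then (1:ℝ) else -1) = (if ε i then 1 else -1)) →
        ∀ a : Fin n → ℝ, (∑ i, (if δ i then (1:ℝ) else -1) *
          (if (i : ℕ) < (k : ℕ) then a i else max (a i) 0))
          = (if δ k then (1:ℝ) else -1) * max (a k) 0 + B a := by
      intro δ hδ a
      rw [← Finset.add_sum_erase _ _ (Finset.mem_univ k)]
      simp only [lt_irrefl, if_false, hB]
      congr 1
      exact Finset.sum_congr rfl (fun i hi => by rw [hδ i hi])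
    have ek1 : ∀ (δ : Fin n → Bool), (∀ i ∈ univ.erase k,
          (if δ i then (1:ℝ) else -1) = (if ε i then 1 else -1)) →
        ∀ a : Fin n → ℝ, (∑ i, (if δ i then (1:ℝ) else -1) *
          (if (i : ℕ) < (k : ℕ) + 1 then a i else max (a i) 0))
          = (if δ k then (1:ℝ) else -1) * a k + B a := by
      intro δ hδ a
      rw [← Finset.add_sum_erase _ _ (Finset.mem_univ k)]
      have : ((k:ℕ) < (k:ℕ) + 1) := Nat.lt_succ_self _
      rw [if_pos this]
      congr 1
      refine Finset.sum_congr rfl (fun i hi => ?_)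
      rw [hδ i hi]
      have h1 : (i : ℕ) ≠ (k : ℕ) := fun h => (Finset.mem_erase.1 hi).1 (Fin.ext h)
      have h2 : ((i : ℕ) < (k : ℕ) + 1) ↔ ((i : ℕ) < (k : ℕ)) := by omega
      by_cases h3 : (i:ℕ) < (k:ℕ)
      · rw [if_pos h3, if_pos (h2.2 h3)]
      · rw [if_neg h3, if_neg (fun hh => h3 (h2.1 hh))]
    have hφk : (φ ε) k = !(ε k) := by simp [φ]
    -- bddAbove facts
    have hbdd : ∀ (δ : Fin n → Bool) (m : ℕ), BddAbove ((fun a => ∑ i,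
        (if δ i then (1:ℝ) else -1) * (if (i : ℕ) < m then a i else max (a i) 0)) '' A) := by
      intro δ m
      apply bdd_img _ (C := C)
      intro a ha i
      have h1 : |a i| ≤ C := hC a ha i
      have h2 : |if (i : ℕ) < m then a i else max (a i) 0| ≤ C := by
        split
        · exact h1
        · rw [abs_of_nonneg (le_max_right _ _)]
          exact le_trans (max_le (le_abs_self _) (abs_nonneg _)) h1
      calc (if δ i then (1:ℝ) else -1) * (if (i : ℕ) < m then a i else max (a i) 0)
          ≤ |(if δ i then (1:ℝ) else -1) * (if (i : ℕ) < m then a i else max (a i) 0)| :=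
            le_abs_self _
        _ = |if (i : ℕ) < m then a i else max (a i) 0| := by
            rw [abs_mul]; split <;> simp
        _ ≤ C := h2
    have hbd1 : BddAbove ((fun a => B a + t a) '' A) := by
      rcases (Bool.eq_false_or_eq_true (ε k)).symm with h | h
      · have := hbdd (φ ε) ((k:ℕ)+1)
        have he : ∀ a : Fin n → ℝ, (∑ i, (if (φ ε) i then (1:ℝ) else -1) *
            (if (i : ℕ) < (k : ℕ) + 1 then a i else max (a i) 0)) = B a + t a := by
          intro a; rw [ek1 (φ ε) hoff a, hφk, h]; simp [ht]; ring
        rwa [show (fun a : Fin n → ℝ => ∑ i, (if (φ ε) i then (1:ℝ) else -1) *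
            (if (i : ℕ) < (k : ℕ) + 1 then a i else max (a i) 0)) = fun a => B a + t a
          from funext he] at this
      · have := hbdd ε ((k:ℕ)+1)
        have he : ∀ a : Fin n → ℝ, (∑ i, (if ε i then (1:ℝ) else -1) *
            (if (i : ℕ) < (k : ℕ) + 1 then a i else max (a i) 0)) = B a + t a := by
          intro a; rw [ek1 ε (fun i _ => rfl) a, h]; simp [ht]; ring
        rwa [show (fun a : Fin n → ℝ => ∑ i, (if ε i then (1:ℝ) else -1) *
            (if (i : ℕ) < (k : ℕ) + 1 then a i else max (a i) 0)) = fun a => B a + t a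
          from funext he] at this
    have hbd2 : BddAbove ((fun a => B a - t a) '' A) := by
      rcases (Bool.eq_false_or_eq_true (ε k)).symm with h | h
      · have := hbdd ε ((k:ℕ)+1)
        have he : ∀ a : Fin n → ℝ, (∑ i, (if ε i then (1:ℝ) else -1) *
            (if (i : ℕ) < (k : ℕ) + 1 then a i else max (a i) 0)) = B a - t a := by
          intro a; rw [ek1 ε (fun i _ => rfl) a, h]; simp [ht]; ring
        rwa [show (fun a : Fin n → ℝ => ∑ i, (if ε i then (1:ℝ) else -1) *
            (if (i : ℕ) < (k : ℕ) + 1 then a i else max (a i) 0)) = fun a => B a - t a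
          from funext he] at this
      · have := hbdd (φ ε) ((k:ℕ)+1)
        have he : ∀ a : Fin n → ℝ, (∑ i, (if (φ ε) i then (1:ℝ) else -1) *
            (if (i : ℕ) < (k : ℕ) + 1 then a i else max (a i) 0)) = B a - t a := by
          intro a; rw [ek1 (φ ε) hoff a, hφk, h]; simp [ht]; ring
        rwa [show (fun a : Fin n → ℝ => ∑ i, (if (φ ε) i then (1:ℝ) else -1) *
            (if (i : ℕ) < (k : ℕ) + 1 then a i else max (a i) 0)) = fun a => B a - t a
          from funext he] at this
    have hcp := core_pair hA hl B t hbd1 hbd2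
    -- rewrite the four hyb's
    rcases (Bool.eq_false_or_eq_true (ε k)).symm with h | h
    · -- ε k = false : hyb k ε = sSup(B - max t 0), hyb k (φ ε) = sSup(B + max t 0)
      have e1 : hyb A k ε = sSup ((fun a => B a - max (t a) 0) '' A) := by
        unfold hyb
        congr 1
        apply congrArg (· '' A)
        funext a
        rw [ek ε (fun i _ => rfl) a, h]; simp [ht]; ring
      have e2 : hyb A k (φ ε) = sSup ((fun a => B a + max (t a) 0) '' A) := by
        unfold hyb
        congr 1
        apply congrArg (· '' A)
        funext a
        rw [ek (φ ε) hoff a, hφk, h]; simp [ht]; ring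
      have e3 : hyb A ((k:ℕ)+1) ε = sSup ((fun a => B a - t a) '' A) := by
        unfold hyb
        congr 1
        apply congrArg (· '' A)
        funext a
        rw [ek1 ε (fun i _ => rfl) a, h]; simp [ht]; ring
      have e4 : hyb A ((k:ℕ)+1) (φ ε) = sSup ((fun a => B a + t a) '' A) := by
        unfold hyb
        congr 1
        apply congrArg (· '' A)
        funext a
        rw [ek1 (φ ε) hoff a, hφk, h]; simp [ht]; ring
      rw [e1, e2, e3, e4]; linarith
    · have e1 : hyb A k ε = sSup ((fun a => B a + max (t a) 0) '' A) := by
        unfold hyb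
        congr 1
        apply congrArg (· '' A)
        funext a
        rw [ek ε (fun i _ => rfl) a, h]; simp [ht]; ring
      have e2 : hyb A k (φ ε) = sSup ((fun a => B a - max (t a) 0) '' A) := by
        unfold hyb
        congr 1
        apply congrArg (· '' A)
        funext a
        rw [ek (φ ε) hoff a, hφk, h]; simp [ht]; ring
      have e3 : hyb A ((k:ℕ)+1) ε = sSup ((fun a => B a + t a) '' A) := by
        unfold hyb
        congr 1
        apply congrArg (· '' A)
        funext a
        rw [ek1 ε (fun i _ => rfl) a, h]; simp [ht]; ring
      have e4 : hyb A ((k:ℕ)+1) (φ ε) = sSup ((fun a => B a - t a) '' A) := by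
        unfold hyb
        congr 1
        apply congrArg (· '' A)
        funext a
        rw [ek1 (φ ε) hoff a, hφk, h]; simp [ht]; ring
      rw [e1, e2, e3, e4]; linarith
  have h2 : (∑ ε : Fin n → Bool, Real.exp (l * hyb A k ε)) * 2
      ≤ (∑ ε : Fin n → Bool, Real.exp (l * hyb A ((k:ℕ)+1) ε)) * 2 := by
    have lhs : (∑ ε : Fin n → Bool, Real.exp (l * hyb A k ε)) * 2
        = ∑ ε : Fin n → Bool, (Real.exp (l * hyb A k ε) + Real.exp (l * hyb A k (φ ε))) := by
      rw [Finset.sum_add_distrib, flipsum (fun ε => Real.exp (l * hyb A k ε))]; ring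
    have rhs : (∑ ε : Fin n → Bool, Real.exp (l * hyb A ((k:ℕ)+1) ε)) * 2
        = ∑ ε : Fin n → Bool, (Real.exp (l * hyb A ((k:ℕ)+1) ε)
            + Real.exp (l * hyb A ((k:ℕ)+1) (φ ε))) := by
      rw [Finset.sum_add_distrib, flipsum (fun ε => Real.exp (l * hyb A ((k:ℕ)+1) ε))]; ring
    rw [lhs, rhs]
    exact Finset.sum_le_sum (fun ε _ => main ε)
  linarith

private lemma contraction_iter {n : ℕ} {A : Set (Fin n → ℝ)} (hA : A.Nonempty) {C : ℝ}
    (hC : ∀ a ∈ A, ∀ i, |a i| ≤ C) {l : ℝ} (hl : 0 < l) :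
    ∑ ε : Fin n → Bool, Real.exp (l * hyb A 0 ε)
      ≤ ∑ ε : Fin n → Bool, Real.exp (l * hyb A n ε) := by
  suffices h : ∀ m, m ≤ n → ∑ ε : Fin n → Bool, Real.exp (l * hyb A 0 ε)
      ≤ ∑ ε : Fin n → Bool, Real.exp (l * hyb A m ε) from h n le_rfl
  intro m
  induction m with
  | zero => intro _; exact le_rfl
  | succ m ih =>
    intro hm
    have hmn : m < n := hm
    exact le_trans (ih hmn.le) (step_lemma hA hC hl ⟨m, hmn⟩)

private lemma deepReluClass_succ (d L : ℕ) (V : ℝ) :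
    deepReluClass d (L + 1) V = reluLayer d (deepReluClass d L V) := by
  simp only [deepReluClass, Function.iterate_succ_apply']

private lemma abs_max_zero_le (t : ℝ) : |max t 0| ≤ |t| := by
  rw [abs_of_nonneg (le_max_right t 0)]
  exact max_le (le_abs_self t) (abs_nonneg t)

private lemma deepReluClass_bound {d : ℕ} {V : ℝ} (hV : 0 ≤ V) :
    ∀ (L : ℕ), ∀ f ∈ deepReluClass d L V, ∀ x : Fin d → ℝ, (∀ j, |x j| ≤ 1) → |f x| ≤ V := by
  intro L
  induction L with
  | zero =>
    rintro f ⟨j, hj | hj⟩ x hx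
    · rw [hj]
      calc |V * x j| = V * |x j| := by rw [abs_mul, abs_of_nonneg hV]
        _ ≤ V * 1 := mul_le_mul_of_nonneg_left (hx j) hV
        _ = V := mul_one V
    · rw [hj]
      calc |-(V * x j)| = V * |x j| := by rw [abs_neg, abs_mul, abs_of_nonneg hV]
        _ ≤ V * 1 := mul_le_mul_of_nonneg_left (hx j) hV
        _ = V := mul_one V
  | succ L ih =>
    intro f hf x hx
    rw [deepReluClass_succ] at hf
    obtain ⟨k, c, g, hg, hc, hfx⟩ := hf
    rw [hfx x]
    calc |∑ j, c j * max (g j x) 0| ≤ ∑ j, |c j * max (g j x) 0| :=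
          Finset.abs_sum_le_sum_abs _ _
      _ = ∑ j, |c j| * |max (g j x) 0| := by simp [abs_mul]
      _ ≤ ∑ j, |c j| * V := Finset.sum_le_sum (fun j _ =>
          mul_le_mul_of_nonneg_left (le_trans (abs_max_zero_le _) (ih (g j) (hg j) x hx))
            (abs_nonneg _))
      _ = (∑ j, |c j|) * V := by rw [Finset.sum_mul]
      _ ≤ 1 * V := mul_le_mul_of_nonneg_right hc hV
      _ = V := one_mul V

private lemma deepReluClass_nonempty {d : ℕ} (hd : 0 < d) (V : ℝ) :
    ∀ L, (deepReluClass d L V).Nonempty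
  | 0 => ⟨fun x => V * x ⟨0, hd⟩, ⟨⟨0, hd⟩, Or.inl rfl⟩⟩
  | (L + 1) => by
    refine ⟨fun _ => 0, ?_⟩
    rw [deepReluClass_succ]
    exact ⟨0, Fin.elim0, Fin.elim0, (fun j => j.elim0), by simp, fun x => by simp⟩

set_option maxHeartbeats 1000000 in
private lemma mgf_bound {n : ℕ} {l V : ℝ} (hl : 0 ≤ l) (hV : 0 ≤ V) (v : Fin n → ℝ)
    (hv : ∀ i, |v i| ≤ V) :
    ∑ ε : Fin n → Bool, Real.exp (l * ∑ i, (if ε i then (1:ℝ) else -1) * v i)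
      ≤ 2 ^ n * Real.exp (n * (l ^ 2 * V ^ 2) / 2) := by
  have key : ∀ ε : Fin n → Bool, Real.exp (l * ∑ i, (if ε i then (1:ℝ) else -1) * v i)
      = ∏ i, Real.exp ((if ε i then (1:ℝ) else -1) * (l * v i)) := by
    intro ε
    rw [Finset.mul_sum, Real.exp_sum]
    exact Finset.prod_congr rfl (fun i _ => by ring_nf)
  calc ∑ ε : Fin n → Bool, Real.exp (l * ∑ i, (if ε i then (1:ℝ) else -1) * v i)
      = ∑ ε : Fin n → Bool, ∏ i, Real.exp ((if ε i then (1:ℝ) else -1) * (l * v i)) := by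
        exact Finset.sum_congr rfl (fun ε _ => key ε)
    _ = ∏ i, ∑ b : Bool, Real.exp ((if b then (1:ℝ) else -1) * (l * v i)) := by
        classical
        exact (Fintype.prod_sum (ι := Fin n) (κ := fun _ => Bool) (R := ℝ)
          (fun i b => Real.exp ((if b then (1:ℝ) else -1) * (l * v i)))).symm
    _ ≤ ∏ _i : Fin n, 2 * Real.exp (l ^ 2 * V ^ 2 / 2) := by
        apply Finset.prod_le_prod
        · intro i _; positivity
        · intro i _
          have h1 : ∑ b : Bool, Real.exp ((if b then (1:ℝ) else -1) * (l * v i))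
              = Real.exp (l * v i) + Real.exp (-(l * v i)) := by
            rw [Fintype.sum_bool]; simp
          rw [h1]
          have h2 : Real.exp (l * v i) + Real.exp (-(l * v i))
              = 2 * Real.cosh (l * v i) := by rw [Real.cosh_eq]; ring
          rw [h2]
          have h3 := Real.cosh_le_exp_half_sq (l * v i)
          have h4 : (l * v i) ^ 2 / 2 ≤ l ^ 2 * V ^ 2 / 2 := by
            have := hv i
            have habs : (v i) ^ 2 ≤ V ^ 2 := by nlinarith [abs_nonneg (v i), le_abs_self (v i), neg_abs_le (v i)]
            nlinarith [sq_nonneg l]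
          calc 2 * Real.cosh (l * v i) ≤ 2 * Real.exp ((l * v i) ^ 2 / 2) := by linarith
            _ ≤ 2 * Real.exp (l ^ 2 * V ^ 2 / 2) := by
                have := Real.exp_le_exp.2 h4; linarith
    _ = 2 ^ n * Real.exp (n * (l ^ 2 * V ^ 2) / 2) := by
        rw [Finset.prod_const, Finset.card_univ, Fintype.card_fin, mul_pow,
          ← Real.exp_nat_mul]
        ring_nf

section Peel
variable {d n L : ℕ} {V : ℝ}

private lemma vec_abs_le (hV : 0 ≤ V) (X : Fin n → Fin d → ℝ) (hX : ∀ i j, |X i j| ≤ 1) :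
    ∀ a ∈ ((fun f (i : Fin n) => f (X i)) '' deepReluClass d L V), ∀ i, |a i| ≤ V := by
  rintro a ⟨f, hf, rfl⟩ i
  exact deepReluClass_bound hV L f hf (X i) (hX i)

private lemma bdd_signed (hV : 0 ≤ V) (X : Fin n → Fin d → ℝ) (hX : ∀ i j, |X i j| ≤ 1)
    (c : Fin n → ℝ) (hc : ∀ i, |c i| ≤ 1) :
    BddAbove ((fun a : Fin n → ℝ => ∑ i, c i * max (a i) 0) ''
      ((fun f (i : Fin n) => f (X i)) '' deepReluClass d L V)) := by
  apply bdd_img _ (C := V)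
  intro a ha i
  calc c i * max (a i) 0 ≤ |c i * max (a i) 0| := le_abs_self _
    _ = |c i| * |max (a i) 0| := abs_mul _ _
    _ ≤ 1 * |a i| := mul_le_mul (hc i) (abs_max_zero_le _) (abs_nonneg _) zero_le_one
    _ ≤ V := by rw [one_mul]; exact vec_abs_le hV X hX a ha i

private lemma peel (hd : 0 < d) (hV : 0 ≤ V) (X : Fin n → Fin d → ℝ)
    (hX : ∀ i j, |X i j| ≤ 1) (ε : Fin n → Bool) :
    sSup ((fun a : Fin n → ℝ => ∑ i, (if ε i then (1:ℝ) else -1) * a i) ''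
        ((fun f (i : Fin n) => f (X i)) '' deepReluClass d (L + 1) V))
      ≤ max (sSup ((fun a : Fin n → ℝ => ∑ i, (if ε i then (1:ℝ) else -1) * max (a i) 0) ''
            ((fun f (i : Fin n) => f (X i)) '' deepReluClass d L V)))
          (sSup ((fun a : Fin n → ℝ => ∑ i, (if !ε i then (1:ℝ) else -1) * max (a i) 0) ''
            ((fun f (i : Fin n) => f (X i)) '' deepReluClass d L V))) := by
  set AL := (fun f (i : Fin n) => f (X i)) '' deepReluClass d L V with hAL
  set P := sSup ((fun a : Fin n → ℝ => ∑ i, (if ε i then (1:ℝ) else -1) * max (a i) 0) '' AL)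
  set Q := sSup ((fun a : Fin n → ℝ => ∑ i, (if !ε i then (1:ℝ) else -1) * max (a i) 0) '' AL)
  have hALne : AL.Nonempty := (deepReluClass_nonempty hd V L).image _
  have hbdP : BddAbove ((fun a : Fin n → ℝ => ∑ i, (if ε i then (1:ℝ) else -1) * max (a i) 0) '' AL) :=
    bdd_signed hV X hX _ (fun i => by split <;> simp)
  have hbdQ : BddAbove ((fun a : Fin n → ℝ => ∑ i, (if !ε i then (1:ℝ) else -1) * max (a i) 0) '' AL) :=
    bdd_signed hV X hX _ (fun i => by split <;> simp)
  -- W ≥ 0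
  have hW : 0 ≤ max P Q := by
    obtain ⟨a₀, ha₀⟩ := hALne
    have h1 : (∑ i, (if ε i then (1:ℝ) else -1) * max (a₀ i) 0) ≤ P :=
      le_csSup hbdP ⟨a₀, ha₀, rfl⟩
    have h2 : (∑ i, (if !ε i then (1:ℝ) else -1) * max (a₀ i) 0) ≤ Q :=
      le_csSup hbdQ ⟨a₀, ha₀, rfl⟩
    have h3 : (∑ i, (if !ε i then (1:ℝ) else -1) * max (a₀ i) 0)
        = -(∑ i, (if ε i then (1:ℝ) else -1) * max (a₀ i) 0) := by
      rw [← Finset.sum_neg_distrib]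
      exact Finset.sum_congr rfl (fun i _ => by cases h : ε i <;> simp [h] <;> ring)
    rw [h3] at h2
    have := le_max_left P Q
    have := le_max_right P Q
    linarith
  apply csSup_le (((deepReluClass_nonempty hd V (L+1)).image _).image _)
  rintro s ⟨a, ⟨f, hf, rfl⟩, rfl⟩
  rw [deepReluClass_succ] at hf
  obtain ⟨k, c, g, hg, hc, hfx⟩ := hf
  show (∑ i, (if ε i then (1:ℝ) else -1) * f (X i)) ≤ max P Q
  have hswap : (∑ i, (if ε i then (1:ℝ) else -1) * f (X i))
      = ∑ j, c j * (∑ i, (if ε i then (1:ℝ) else -1) * max (g j (X i)) 0) := by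
    have : ∀ i : Fin n, (if ε i then (1:ℝ) else -1) * f (X i)
        = ∑ j, c j * ((if ε i then (1:ℝ) else -1) * max (g j (X i)) 0) := by
      intro i
      rw [hfx (X i), Finset.mul_sum]
      exact Finset.sum_congr rfl (fun j _ => by ring)
    rw [Finset.sum_congr rfl (fun i _ => this i), Finset.sum_comm]
    exact Finset.sum_congr rfl (fun j _ => by rw [← Finset.mul_sum])
  rw [hswap]
  have hT : ∀ j : Fin k, c j * (∑ i, (if ε i then (1:ℝ) else -1) * max (g j (X i)) 0)
      ≤ |c j| * max P Q := by
    intro j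
    have hmem : (fun i : Fin n => g j (X i)) ∈ AL := ⟨g j, hg j, rfl⟩
    have h1 : (∑ i, (if ε i then (1:ℝ) else -1) * max (g j (X i)) 0) ≤ P :=
      le_csSup hbdP ⟨_, hmem, rfl⟩
    have h2 : -(∑ i, (if ε i then (1:ℝ) else -1) * max (g j (X i)) 0) ≤ Q := by
      have h3 : -(∑ i, (if ε i then (1:ℝ) else -1) * max (g j (X i)) 0)
          = ∑ i, (if !ε i then (1:ℝ) else -1) * max (g j (X i)) 0 := by
        rw [← Finset.sum_neg_distrib]
        exact Finset.sum_congr rfl (fun i _ => by cases h : ε i <;> simp [h] <;> ring)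
      rw [h3]
      exact le_csSup hbdQ ⟨_, hmem, rfl⟩
    have habs : |∑ i, (if ε i then (1:ℝ) else -1) * max (g j (X i)) 0| ≤ max P Q :=
      abs_le'.2 ⟨le_trans h1 (le_max_left _ _), le_trans h2 (le_max_right _ _)⟩
    calc c j * (∑ i, (if ε i then (1:ℝ) else -1) * max (g j (X i)) 0)
        ≤ |c j * (∑ i, (if ε i then (1:ℝ) else -1) * max (g j (X i)) 0)| := le_abs_self _
      _ = |c j| * |∑ i, (if ε i then (1:ℝ) else -1) * max (g j (X i)) 0| := abs_mul _ _
      _ ≤ |c j| * max P Q := mul_le_mul_of_nonneg_left habs (abs_nonneg _)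
  calc (∑ j, c j * (∑ i, (if ε i then (1:ℝ) else -1) * max (g j (X i)) 0))
      ≤ ∑ j, |c j| * max P Q := Finset.sum_le_sum (fun j _ => hT j)
    _ = (∑ j, |c j|) * max P Q := by rw [Finset.sum_mul]
    _ ≤ 1 * max P Q := mul_le_mul_of_nonneg_right hc hW
    _ = max P Q := one_mul _

end Peel

private lemma exp_max_le (x y : ℝ) : Real.exp (max x y) ≤ Real.exp x + Real.exp y := by
  rcases le_total x y with h | h
  · rw [max_eq_right h]; linarith [Real.exp_pos x]
  · rw [max_eq_left h]; linarith [Real.exp_pos y]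

set_option maxHeartbeats 1000000 in
/-- **complexity bound for ReLU networks.** For inputs in `[−1,1]^d`,
the empirical Rademacher complexity of `ℱ_{L,V}` satisfies
`E[sup_{f∈ℱ_{L,V}} ∑ᵢ ξᵢ f(Xᵢ)] ≤ V √(2n(L log 2 + log(2d)))`. -/
theorem deep_relu_rademacher_complexity_bound
    (d n L : ℕ) (hd : 0 < d) (V : ℝ) (hV : 0 ≤ V)
    (X : Fin n → Fin d → ℝ) (hX : ∀ i j, |X i j| ≤ 1) :
    radAvg n (fun ξ => sSup ((fun f => ∑ i, ξ i * f (X i)) '' deepReluClass d L V))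
      ≤ V * Real.sqrt (2 * n * (L * Real.log 2 + Real.log (2 * d))) := by
  classical
  have hRHS : 0 ≤ V * Real.sqrt (2 * n * (L * Real.log 2 + Real.log (2 * d))) :=
    mul_nonneg hV (Real.sqrt_nonneg _)
  rcases Nat.eq_zero_or_pos n with hn | hn
  · subst hn
    have h0 : (fun ξ : Fin 0 → ℝ => sSup ((fun f => ∑ i, ξ i * f (X i)) '' deepReluClass d L V))
        = fun _ => sSup ((fun _ : (Fin d → ℝ) → ℝ => (0:ℝ)) '' deepReluClass d L V) := by
      funext ξ
      congr 1
    rw [h0, Set.Nonempty.image_const (deepReluClass_nonempty hd V L) 0]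
    rw [radAvg]
    simp [csSup_singleton]
  rcases eq_or_lt_of_le hV with hV0 | hVpos
  · -- V = 0
    have hzero : ∀ ξ : Fin n → ℝ,
        (fun f => ∑ i, ξ i * f (X i)) '' deepReluClass d L V = {0} := by
      intro ξ
      apply Set.eq_singleton_iff_nonempty_unique_mem.2
      refine ⟨(deepReluClass_nonempty hd V L).image _, ?_⟩
      rintro s ⟨f, hf, rfl⟩
      have : ∀ i, f (X i) = 0 := by
        intro i
        have := deepReluClass_bound hV L f hf (X i) (hX i)
        rw [← hV0] at this
        exact abs_nonpos_iff.1 this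
      simp [this]
    have h0 : (fun ξ : Fin n → ℝ => sSup ((fun f => ∑ i, ξ i * f (X i)) '' deepReluClass d L V))
        = fun _ => (0:ℝ) := by
      funext ξ; rw [hzero ξ, csSup_singleton]
    rw [h0, radAvg]
    simpa using hRHS
  -- main case
  set K := (L : ℝ) * Real.log 2 + Real.log (2 * d) with hK_def
  have hlog2 : 0 < Real.log 2 := Real.log_pos one_lt_two
  have hd1 : (1:ℝ) ≤ d := Nat.one_le_cast.2 hd
  have hlog2d : 0 < Real.log (2 * d) := Real.log_pos (by linarith)
  have hK : 0 < K :=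
    add_pos_of_nonneg_of_pos (mul_nonneg (Nat.cast_nonneg L) hlog2.le) hlog2d
  have hn' : (0:ℝ) < n := Nat.cast_pos.2 hn
  set s := Real.sqrt (2 * n * K) with hs_def
  have hs : 0 < s := Real.sqrt_pos.2 (by positivity)
  have hs2 : s ^ 2 = 2 * n * K := Real.sq_sqrt (by positivity)
  set l := s / (n * V) with hl_def
  have hl : 0 < l := div_pos hs (by positivity)
  set A : ℕ → Set (Fin n → ℝ) :=
    fun L' => (fun f (i : Fin n) => f (X i)) '' deepReluClass d L' V with hA_def
  have hAne : ∀ L', (A L').Nonempty := fun L' => (deepReluClass_nonempty hd V L').image _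
  have hAC : ∀ L' a, a ∈ A L' → ∀ i, |a i| ≤ V := fun L' => vec_abs_le hV X hX
  set E : ℕ → ℝ := fun L' => ∑ ε : Fin n → Bool,
    Real.exp (l * sSup ((fun a : Fin n → ℝ =>
      ∑ i, (if ε i then (1:ℝ) else -1) * a i) '' A L')) with hE_def
  -- layer step
  have hstep : ∀ L', E (L' + 1) ≤ 2 * E L' := by
    intro L'
    have h1 : ∀ ε : Fin n → Bool,
        Real.exp (l * sSup ((fun a : Fin n → ℝ =>
            ∑ i, (if ε i then (1:ℝ) else -1) * a i) '' A (L' + 1)))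
        ≤ Real.exp (l * sSup ((fun a : Fin n → ℝ =>
              ∑ i, (if ε i then (1:ℝ) else -1) * max (a i) 0) '' A L'))
          + Real.exp (l * sSup ((fun a : Fin n → ℝ =>
              ∑ i, (if !ε i then (1:ℝ) else -1) * max (a i) 0) '' A L')) := by
      intro ε
      have hp := peel (L := L') (n := n) hd hV X hX ε
      have h2 := Real.exp_le_exp.2 (mul_le_mul_of_nonneg_left hp hl.le)
      refine le_trans h2 ?_
      rw [mul_max_of_nonneg _ _ hl.le]
      exact exp_max_le _ _
    have hflip : (∑ ε : Fin n → Bool, Real.exp (l * sSup ((fun a : Fin n → ℝ =>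
          ∑ i, (if !ε i then (1:ℝ) else -1) * max (a i) 0) '' A L')))
        = ∑ ε : Fin n → Bool, Real.exp (l * sSup ((fun a : Fin n → ℝ =>
          ∑ i, (if ε i then (1:ℝ) else -1) * max (a i) 0) '' A L')) := by
      apply Fintype.sum_bijective (fun ε : Fin n → Bool => fun i => !ε i)
        (Function.Involutive.bijective (fun ε => by funext i; simp))
      intro ε
      rfl
    have hcontr : (∑ ε : Fin n → Bool, Real.exp (l * sSup ((fun a : Fin n → ℝ =>
          ∑ i, (if ε i then (1:ℝ) else -1) * max (a i) 0) '' A L')))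
        ≤ E L' := by
      have e0 : ∀ ε : Fin n → Bool, hyb (A L') 0 ε
          = sSup ((fun a : Fin n → ℝ =>
            ∑ i, (if ε i then (1:ℝ) else -1) * max (a i) 0) '' A L') := by
        intro ε
        unfold hyb
        have : (fun a : Fin n → ℝ => ∑ i, (if ε i then (1:ℝ) else -1) *
            (if (i : ℕ) < 0 then a i else max (a i) 0))
            = fun a : Fin n → ℝ => ∑ i, (if ε i then (1:ℝ) else -1) * max (a i) 0 := by
          funext a
          exact Finset.sum_congr rfl (fun i _ => by rw [if_neg (Nat.not_lt_zero _)])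
        rw [this]
      have en : ∀ ε : Fin n → Bool, hyb (A L') n ε
          = sSup ((fun a : Fin n → ℝ =>
            ∑ i, (if ε i then (1:ℝ) else -1) * a i) '' A L') := by
        intro ε
        unfold hyb
        have : (fun a : Fin n → ℝ => ∑ i, (if ε i then (1:ℝ) else -1) *
            (if (i : ℕ) < n then a i else max (a i) 0))
            = fun a : Fin n → ℝ => ∑ i, (if ε i then (1:ℝ) else -1) * a i := by
          funext a
          exact Finset.sum_congr rfl (fun i _ => by rw [if_pos i.isLt])
        rw [this]
      have := contraction_iter (hAne L') (hAC L') hl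
      simp only [e0, en] at this
      exact this
    calc E (L' + 1) ≤ ∑ ε : Fin n → Bool,
        (Real.exp (l * sSup ((fun a : Fin n → ℝ =>
            ∑ i, (if ε i then (1:ℝ) else -1) * max (a i) 0) '' A L'))
          + Real.exp (l * sSup ((fun a : Fin n → ℝ =>
            ∑ i, (if !ε i then (1:ℝ) else -1) * max (a i) 0) '' A L'))) :=
          Finset.sum_le_sum (fun ε _ => h1 ε)
      _ = (∑ ε : Fin n → Bool, Real.exp (l * sSup ((fun a : Fin n → ℝ =>
            ∑ i, (if ε i then (1:ℝ) else -1) * max (a i) 0) '' A L')))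
          + ∑ ε : Fin n → Bool, Real.exp (l * sSup ((fun a : Fin n → ℝ =>
            ∑ i, (if !ε i then (1:ℝ) else -1) * max (a i) 0) '' A L')) :=
          Finset.sum_add_distrib
      _ = 2 * ∑ ε : Fin n → Bool, Real.exp (l * sSup ((fun a : Fin n → ℝ =>
            ∑ i, (if ε i then (1:ℝ) else -1) * max (a i) 0) '' A L')) := by
          rw [hflip]; ring
      _ ≤ 2 * E L' := by linarith [hcontr]
  -- E L ≤ 2^L E 0
  have hEL : ∀ m, E m ≤ 2 ^ m * E 0 := by
    intro m
    induction m with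
    | zero => simp
    | succ m ih =>
      calc E (m + 1) ≤ 2 * E m := hstep m
        _ ≤ 2 * (2 ^ m * E 0) := by linarith
        _ = 2 ^ (m + 1) * E 0 := by ring
  -- base bound
  have hE0 : E 0 ≤ (2 * d) * (2 ^ n * Real.exp (n * (l ^ 2 * V ^ 2) / 2)) := by
    have hterm : ∀ ε : Fin n → Bool,
        Real.exp (l * sSup ((fun a : Fin n → ℝ =>
            ∑ i, (if ε i then (1:ℝ) else -1) * a i) '' A 0))
        ≤ ∑ j : Fin d,
            (Real.exp (l * ∑ i, (if ε i then (1:ℝ) else -1) * (V * X i j))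
              + Real.exp (l * ∑ i, (if ε i then (1:ℝ) else -1) * (-(V * X i j)))) := by
      intro ε
      apply exp_mul_csSup_le ((hAne 0).image _) hl
      rintro t ⟨a, ⟨f, hf, rfl⟩, rfl⟩
      have hf' : f ∈ initClass d V := by
        simpa [deepReluClass] using hf
      obtain ⟨j, hj | hj⟩ := hf'
      · subst hj
        refine le_trans (le_add_of_nonneg_right (Real.exp_pos _).le)
          (Finset.single_le_sum (f := fun j : Fin d =>
            Real.exp (l * ∑ i, (if ε i then (1:ℝ) else -1) * (V * X i j))
              + Real.exp (l * ∑ i, (if ε i then (1:ℝ) else -1) * (-(V * X i j))))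
            (fun j _ => by positivity) (Finset.mem_univ j))
      · subst hj
        refine le_trans (le_add_of_nonneg_left (Real.exp_pos _).le)
          (Finset.single_le_sum (f := fun j : Fin d =>
            Real.exp (l * ∑ i, (if ε i then (1:ℝ) else -1) * (V * X i j))
              + Real.exp (l * ∑ i, (if ε i then (1:ℝ) else -1) * (-(V * X i j))))
            (fun j _ => by positivity) (Finset.mem_univ j))
    calc E 0 ≤ ∑ ε : Fin n → Bool, ∑ j : Fin d,
          (Real.exp (l * ∑ i, (if ε i then (1:ℝ) else -1) * (V * X i j))
            + Real.exp (l * ∑ i, (if ε i then (1:ℝ) else -1) * (-(V * X i j)))) :=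
        Finset.sum_le_sum (fun ε _ => hterm ε)
      _ = ∑ j : Fin d,
          ((∑ ε : Fin n → Bool, Real.exp (l * ∑ i, (if ε i then (1:ℝ) else -1) * (V * X i j)))
            + ∑ ε : Fin n → Bool, Real.exp (l * ∑ i, (if ε i then (1:ℝ) else -1) * (-(V * X i j)))) := by
        rw [Finset.sum_comm]
        exact Finset.sum_congr rfl (fun j _ => Finset.sum_add_distrib)
      _ ≤ ∑ _j : Fin d, (2 ^ n * Real.exp (n * (l ^ 2 * V ^ 2) / 2)
            + 2 ^ n * Real.exp (n * (l ^ 2 * V ^ 2) / 2)) := by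
        apply Finset.sum_le_sum
        intro j _
        have hv1 : ∀ i, |V * X i j| ≤ V := by
          intro i
          calc |V * X i j| = V * |X i j| := by rw [abs_mul, abs_of_nonneg hV]
            _ ≤ V * 1 := mul_le_mul_of_nonneg_left (hX i j) hV
            _ = V := mul_one V
        have hv2 : ∀ i, |-(V * X i j)| ≤ V := fun i => by rw [abs_neg]; exact hv1 i
        exact add_le_add (mgf_bound hl.le hV _ hv1) (mgf_bound hl.le hV _ hv2)
      _ = (2 * d) * (2 ^ n * Real.exp (n * (l ^ 2 * V ^ 2) / 2)) := by
        rw [Finset.sum_const, Finset.card_univ, Fintype.card_fin, nsmul_eq_mul]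
        ring
  -- Jensen
  set R := radAvg n (fun ξ => sSup ((fun f => ∑ i, ξ i * f (X i)) '' deepReluClass d L V)) with hR_def
  have hGrw : ∀ ε : Fin n → Bool,
      sSup ((fun f => ∑ i, (if ε i then (1:ℝ) else -1) * f (X i)) '' deepReluClass d L V)
      = sSup ((fun a : Fin n → ℝ => ∑ i, (if ε i then (1:ℝ) else -1) * a i) '' A L) := by
    intro ε
    rw [hA_def, Set.image_image]
  have hcard : ∑ _ε : Fin n → Bool, ((2:ℝ) ^ n)⁻¹ = 1 := by
    rw [Finset.sum_const, Finset.card_univ, nsmul_eq_mul]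
    have : Fintype.card (Fin n → Bool) = 2 ^ n := by
      simp [Fintype.card_fun]
    rw [this]
    push_cast
    field_simp
  have hJ : Real.exp (l * R) ≤ E L / 2 ^ n := by
    have hjen := (convexOn_exp).map_sum_le (t := Finset.univ)
      (w := fun _ : Fin n → Bool => ((2:ℝ) ^ n)⁻¹)
      (p := fun ε : Fin n → Bool => l * sSup ((fun a : Fin n → ℝ =>
        ∑ i, (if ε i then (1:ℝ) else -1) * a i) '' A L))
      (fun _ _ => by positivity) hcard (fun _ _ => Set.mem_univ _)
    have hlhs : (∑ ε : Fin n → Bool, ((2:ℝ) ^ n)⁻¹ * (l * sSup ((fun a : Fin n → ℝ =>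
        ∑ i, (if ε i then (1:ℝ) else -1) * a i) '' A L))) = l * R := by
      rw [hR_def]
      unfold radAvg
      simp only [smul_eq_mul, hGrw]
      rw [← Finset.mul_sum, ← Finset.mul_sum]
      ring
    have hrhs : (∑ ε : Fin n → Bool, ((2:ℝ) ^ n)⁻¹ * Real.exp (l * sSup ((fun a : Fin n → ℝ =>
        ∑ i, (if ε i then (1:ℝ) else -1) * a i) '' A L))) = E L / 2 ^ n := by
      rw [hE_def, ← Finset.mul_sum]
      ring
    simp only [smul_eq_mul] at hjen
    rw [hlhs, hrhs] at hjen
    exact hjen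
  -- combine
  have hcomb : Real.exp (l * R) ≤ 2 ^ L * ((2:ℝ) * d) * Real.exp (n * (l ^ 2 * V ^ 2) / 2) := by
    have h2n : (0:ℝ) < 2 ^ n := by positivity
    have h1 : E L / 2 ^ n ≤ (2 ^ L * E 0) / 2 ^ n := by gcongr; exact hEL L
    have h2 : (2 ^ L * E 0) / 2 ^ n
        ≤ (2 ^ L * ((2 * d) * (2 ^ n * Real.exp (n * (l ^ 2 * V ^ 2) / 2)))) / 2 ^ n := by
      gcongr
    have h3 : (2 ^ L * ((2 * (d:ℝ)) * (2 ^ n * Real.exp (n * (l ^ 2 * V ^ 2) / 2)))) / 2 ^ n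
        = 2 ^ L * ((2:ℝ) * d) * Real.exp (n * (l ^ 2 * V ^ 2) / 2) := by
      field_simp
    calc Real.exp (l * R) ≤ E L / 2 ^ n := hJ
      _ ≤ (2 ^ L * E 0) / 2 ^ n := h1
      _ ≤ (2 ^ L * ((2 * d) * (2 ^ n * Real.exp (n * (l ^ 2 * V ^ 2) / 2)))) / 2 ^ n := h2
      _ = 2 ^ L * ((2:ℝ) * d) * Real.exp (n * (l ^ 2 * V ^ 2) / 2) := h3
  -- take logs
  have hexp_eq : (2:ℝ) ^ L * ((2:ℝ) * d) * Real.exp (n * (l ^ 2 * V ^ 2) / 2)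
      = Real.exp (K + n * (l ^ 2 * V ^ 2) / 2) := by
    rw [hK_def, Real.exp_add, Real.exp_add, Real.exp_nat_mul, Real.exp_log (by norm_num : (0:ℝ) < 2)]
    rw [Real.exp_log (by positivity : (0:ℝ) < 2 * d)]
  have hlog : l * R ≤ K + n * (l ^ 2 * V ^ 2) / 2 := by
    apply Real.exp_le_exp.1
    rw [← hexp_eq]
    exact hcomb
  have hfin : R ≤ (K + n * (l ^ 2 * V ^ 2) / 2) / l := by
    rw [le_div_iff₀ hl, mul_comm]
    exact hlog
  have harith : (K + (n:ℝ) * (l ^ 2 * V ^ 2) / 2) / l = V * s := by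
    rw [hl_def]
    field_simp
    linear_combination (-1 : ℝ) * hs2
  rw [harith] at hfin
  rw [hR_def] at hfin
  exact le_trans hfin (le_of_eq rfl)
end
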